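/- The weighted squared interpolation error on the unit interval satisfies ∫_0^1 (f̂(ξ) − L̂(ξ))² ĝ(ξ) dξ ≤ 2 ∫_0^1 Ĝ(t) (f̂″(t))² dt. -/

import Mathlib

open MeasureTheory intervalIntegral Set

lemma cs_interval {a b : ℝ} (hab : a ≤ b) {u v : ℝ → ℝ}
    (hu : ContinuousOn u (Set.Icc a b)) (hv : ContinuousOn v (Set.Icc a b)) :
    (∫ t in a..b, u t * v t) ^ 2 ≤ (∫ t in a..b, (u t) ^ 2) * ∫ t in a..b, (v t) ^ 2 := by
  have huv : IntervalIntegrable (fun t => u t * v t) volume a b :=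
    ((hu.mul hv).mono (by rw [Set.uIcc_of_le hab])).intervalIntegrable
  have hu2 : IntervalIntegrable (fun t => (u t) ^ 2) volume a b :=
    ((hu.pow 2).mono (by rw [Set.uIcc_of_le hab])).intervalIntegrable
  have hv2 : IntervalIntegrable (fun t => (v t) ^ 2) volume a b :=
    ((hv.pow 2).mono (by rw [Set.uIcc_of_le hab])).intervalIntegrable
  have key : ∀ lam : ℝ, 0 ≤ (∫ t in a..b, (u t) ^ 2) * (lam * lam)
      + (2 * ∫ t in a..b, u t * v t) * lam + ∫ t in a..b, (v t) ^ 2 := by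
    intro lam
    have : 0 ≤ ∫ t in a..b, (lam * u t + v t) ^ 2 := by
      apply intervalIntegral.integral_nonneg hab
      intro x _; positivity
    calc (0:ℝ) ≤ ∫ t in a..b, (lam * u t + v t) ^ 2 := this
      _ = (∫ t in a..b, (u t) ^ 2) * (lam * lam)
          + (2 * ∫ t in a..b, u t * v t) * lam + ∫ t in a..b, (v t) ^ 2 := by
        have : ∀ t, (lam * u t + v t) ^ 2
            = lam * lam * (u t)^2 + (2*lam) * (u t * v t) + (v t)^2 := by intro t; ring
        simp_rw [this]
        rw [intervalIntegral.integral_add (((hu2.const_mul _)).add (huv.const_mul _)) hv2,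
          intervalIntegral.integral_add (hu2.const_mul _) (huv.const_mul _),
          intervalIntegral.integral_const_mul, intervalIntegral.integral_const_mul]
        ring
  have := discrim_le_zero key
  rw [discrim] at this
  nlinarith [this]


lemma parts1 (u v : ℝ → ℝ) (hu : ContinuousOn u (Set.Icc 0 1))
    (hv : ContinuousOn v (Set.Icc 0 1)) :
    ∫ x in (0:ℝ)..1, u x * (∫ t in (0:ℝ)..x, v t)
      = (∫ s in (0:ℝ)..1, u s) * (∫ t in (0:ℝ)..1, v t)
        - ∫ x in (0:ℝ)..1, (∫ s in (0:ℝ)..x, u s) * v x := by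
  have hIicc : ∀ {a b : ℝ}, (0:ℝ) ≤ a → b ≤ 1 → Set.Icc a b ⊆ Set.Icc (0:ℝ) 1 := by
    intro a b ha hb; exact Set.Icc_subset_Icc ha hb
  have hci : ∀ (w : ℝ → ℝ), ContinuousOn w (Set.Icc 0 1) → ∀ {a b : ℝ}, 0 ≤ a → a ≤ b → b ≤ 1 →
      IntervalIntegrable w volume a b := by
    intro w hw a b ha hab hb
    apply ContinuousOn.intervalIntegrable
    rw [Set.uIcc_of_le hab]
    exact hw.mono (hIicc ha hb)
  have hprimc : ∀ (w : ℝ → ℝ), ContinuousOn w (Set.Icc 0 1) →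
      ContinuousOn (fun y => ∫ t in (0:ℝ)..y, w t) (Set.Icc 0 1) := by
    intro w hw
    have : IntegrableOn w (Set.uIcc 0 1) volume := by
      rw [Set.uIcc_of_le zero_le_one]; exact hw.integrableOn_Icc
    have h2 := intervalIntegral.continuousOn_primitive_interval this
    rwa [Set.uIcc_of_le zero_le_one] at h2
  have hprimd : ∀ (w : ℝ → ℝ), ContinuousOn w (Set.Icc 0 1) → ∀ x ∈ Set.Ioo (0:ℝ) 1,
      HasDerivAt (fun y => ∫ t in (0:ℝ)..y, w t) (w x) x := by
    intro w hw x hx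
    refine intervalIntegral.integral_hasDerivAt_right (hci w hw le_rfl hx.1.le hx.2.le)
      ⟨Set.Ioo 0 1, Ioo_mem_nhds hx.1 hx.2,
        (hw.mono Set.Ioo_subset_Icc_self).aestronglyMeasurable measurableSet_Ioo⟩
      ((hw x (Set.Ioo_subset_Icc_self hx)).continuousAt (Icc_mem_nhds hx.1 hx.2))
  have hUc := hprimc u hu
  have hVc := hprimc v hv
  have hcont : ContinuousOn (fun x => (∫ s in (0:ℝ)..x, u s) * ∫ t in (0:ℝ)..x, v t)
      (Set.Icc 0 1) := hUc.mul hVc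
  have hderiv : ∀ x ∈ Set.Ioo (0:ℝ) 1,
      HasDerivWithinAt (fun x => (∫ s in (0:ℝ)..x, u s) * ∫ t in (0:ℝ)..x, v t)
        (u x * (∫ t in (0:ℝ)..x, v t) + (∫ s in (0:ℝ)..x, u s) * v x) (Set.Ioi x) x := by
    intro x hx
    exact ((hprimd u hu x hx).mul (hprimd v hv x hx)).hasDerivWithinAt
  have hint : IntervalIntegrable
      (fun x => u x * (∫ t in (0:ℝ)..x, v t) + (∫ s in (0:ℝ)..x, u s) * v x) volume 0 1 :=
    hci _ ((hu.mul hVc).add (hUc.mul hv)) le_rfl zero_le_one le_rfl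
  have key := intervalIntegral.integral_eq_sub_of_hasDeriv_right_of_le zero_le_one
    hcont hderiv hint
  simp only [intervalIntegral.integral_same, zero_mul, sub_zero] at key
  rw [intervalIntegral.integral_add (f := fun x => u x * ∫ t in (0:ℝ)..x, v t)
    (g := fun x => (∫ s in (0:ℝ)..x, u s) * v x) (hci _ (hu.mul hVc) le_rfl zero_le_one le_rfl)
    (hci _ (hUc.mul hv) le_rfl zero_le_one le_rfl)] at key
  linarith [key]

theorem unit_interval_weighted_error_bound
    (f g : ℝ → ℝ) (hf : ContDiffOn ℝ 2 f (Set.Icc 0 1))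
    (hg0 : ∀ ξ ∈ Set.Icc (0:ℝ) 1, 0 ≤ g ξ)
    (hgc : ContinuousOn g (Set.Icc 0 1)) :
    ∫ ξ in (0:ℝ)..1, (f ξ - (f 0 * (1 - ξ) + f 1 * ξ)) ^ 2 * g ξ
      ≤ 2 * ∫ t in (0:ℝ)..1,
          ((∫ ξ in (0:ℝ)..t, g ξ * (ξ ^ 2 * (1 - ξ) ^ 3 / 3))
            + ∫ ξ in t..(1:ℝ), g ξ * ((1 - ξ) ^ 2 * ξ ^ 3 / 3))
          * (deriv (deriv f) t) ^ 2 := by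
  set I : Set ℝ := Set.Icc 0 1 with hI
  set F1 : ℝ → ℝ := derivWithin f I with hF1
  set F2 : ℝ → ℝ := derivWithin F1 I with hF2
  have hud : UniqueDiffOn ℝ I := uniqueDiffOn_Icc one_pos
  have hfc : ContinuousOn f I := hf.continuousOn
  have hF1cd : ContDiffOn ℝ 1 F1 I := hf.derivWithin hud (by norm_num)
  have hF1c : ContinuousOn F1 I := hF1cd.continuousOn
  have hF2c : ContinuousOn F2 I := hF1cd.continuousOn_derivWithin hud le_rfl
  have hmem : ∀ x ∈ Set.Ioo (0:ℝ) 1, I ∈ nhds x := fun x hx =>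
    Icc_mem_nhds hx.1 hx.2
  have hd1 : ∀ x ∈ Set.Ioo (0:ℝ) 1, HasDerivAt f (F1 x) x := by
    intro x hx
    have hdx : DifferentiableAt ℝ f x :=
      (hf.differentiableOn (by norm_num) x (Set.Ioo_subset_Icc_self hx)).differentiableAt
        (hmem x hx)
    have : F1 x = deriv f x := derivWithin_of_mem_nhds (hmem x hx)
    rw [this]; exact hdx.hasDerivAt
  have hd2 : ∀ x ∈ Set.Ioo (0:ℝ) 1, HasDerivAt F1 (F2 x) x := by
    intro x hx
    have hdx : DifferentiableAt ℝ F1 x :=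
      (hF1cd.differentiableOn (by norm_num) x (Set.Ioo_subset_Icc_self hx)).differentiableAt
        (hmem x hx)
    have : F2 x = deriv F1 x := derivWithin_of_mem_nhds (hmem x hx)
    rw [this]; exact hdx.hasDerivAt
  have hdd : ∀ x ∈ Set.Ioo (0:ℝ) 1, deriv (deriv f) x = F2 x := by
    intro x hx
    have hev : deriv f =ᶠ[nhds x] F1 := by
      filter_upwards [Ioo_mem_nhds hx.1 hx.2] with y hy
      exact (derivWithin_of_mem_nhds (hmem y hy)).symm
    rw [hev.deriv_eq]
    exact (hd2 x hx).deriv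
  -- integrability of F2 and its square
  have hIicc : ∀ {a b : ℝ}, (0:ℝ) ≤ a → b ≤ 1 → Set.Icc a b ⊆ I := by
    intro a b ha hb
    exact Set.Icc_subset_Icc ha hb
  -- Peano kernel representation
  have I1eq : ∀ x ∈ Set.Ioo (0:ℝ) 1,
      (∫ t in (0:ℝ)..x, t * F2 t) = x * F1 x - (f x - f 0) := by
    intro x hx
    have hle : (0:ℝ) ≤ x := hx.1.le
    have hsub : Set.Icc (0:ℝ) x ⊆ I := hIicc le_rfl hx.2.le
    have hcont : ContinuousOn (fun t => t * F1 t - f t) (Set.Icc 0 x) :=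
      ((continuousOn_id.mul (hF1c.mono hsub)).sub (hfc.mono hsub))
    have hderiv : ∀ t ∈ Set.Ioo (0:ℝ) x, HasDerivWithinAt (fun t => t * F1 t - f t)
        (t * F2 t) (Set.Ioi t) t := by
      intro t ht
      have ht' : t ∈ Set.Ioo (0:ℝ) 1 := ⟨ht.1, lt_of_lt_of_le ht.2 hx.2.le⟩
      have h := (((hasDerivAt_id t).mul (hd2 t ht')).sub (hd1 t ht'))
      refine h.hasDerivWithinAt.congr_deriv ?_
      simp [id]
    have hint : IntervalIntegrable (fun t => t * F2 t) volume 0 x :=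
      ((continuousOn_id.mul (hF2c.mono hsub)).mono
        (by rw [Set.uIcc_of_le hle])).intervalIntegrable
    have := intervalIntegral.integral_eq_sub_of_hasDeriv_right_of_le hle hcont hderiv hint
    rw [this]; ring_nf
  have I2eq : ∀ x ∈ Set.Ioo (0:ℝ) 1,
      (∫ t in x..(1:ℝ), (1 - t) * F2 t) = f 1 - ((1 - x) * F1 x + f x) := by
    intro x hx
    have hle : x ≤ (1:ℝ) := hx.2.le
    have hsub : Set.Icc x (1:ℝ) ⊆ I := hIicc hx.1.le le_rfl
    have hcont : ContinuousOn (fun t => (1 - t) * F1 t + f t) (Set.Icc x 1) :=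
      (((continuousOn_const.sub continuousOn_id).mul (hF1c.mono hsub)).add (hfc.mono hsub))
    have hderiv : ∀ t ∈ Set.Ioo x (1:ℝ), HasDerivWithinAt (fun t => (1 - t) * F1 t + f t)
        ((1 - t) * F2 t) (Set.Ioi t) t := by
      intro t ht
      have ht' : t ∈ Set.Ioo (0:ℝ) 1 := ⟨lt_of_le_of_lt hx.1.le ht.1, ht.2⟩
      have h := ((((hasDerivAt_const t (1:ℝ)).sub (hasDerivAt_id t)).mul (hd2 t ht')).add
        (hd1 t ht'))
      refine h.hasDerivWithinAt.congr_deriv ?_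
      simp [id]
    have hint : IntervalIntegrable (fun t => (1 - t) * F2 t) volume x 1 :=
      (((continuousOn_const.sub continuousOn_id).mul (hF2c.mono hsub)).mono
        (by rw [Set.uIcc_of_le hle])).intervalIntegrable
    have := intervalIntegral.integral_eq_sub_of_hasDeriv_right_of_le hle hcont hderiv hint
    rw [this]; ring_nf
  -- general helpers
  have hci : ∀ (u : ℝ → ℝ), ContinuousOn u I → ∀ {a b : ℝ}, 0 ≤ a → a ≤ b → b ≤ 1 →
      IntervalIntegrable u volume a b := by
    intro u hu a b ha hab hb
    apply ContinuousOn.intervalIntegrable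
    rw [Set.uIcc_of_le hab]
    exact hu.mono (hIicc ha hb)
  have hprimc : ∀ (u : ℝ → ℝ), ContinuousOn u I →
      ContinuousOn (fun y => ∫ t in (0:ℝ)..y, u t) I := by
    intro u hu
    have : IntegrableOn u (Set.uIcc 0 1) volume := by
      rw [Set.uIcc_of_le zero_le_one]; exact hu.integrableOn_Icc
    simpa [hI] using intervalIntegral.continuousOn_primitive_interval this
  have hprimd : ∀ (u : ℝ → ℝ), ContinuousOn u I → ∀ x ∈ Set.Ioo (0:ℝ) 1,
      HasDerivAt (fun y => ∫ t in (0:ℝ)..y, u t) (u x) x := by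
    intro u hu x hx
    refine intervalIntegral.integral_hasDerivAt_right (hci u hu le_rfl hx.1.le hx.2.le)
      ⟨Set.Ioo 0 1, Ioo_mem_nhds hx.1 hx.2,
        (hu.mono Set.Ioo_subset_Icc_self).aestronglyMeasurable measurableSet_Ioo⟩
      ((hu x (Set.Ioo_subset_Icc_self hx)).continuousAt (hmem x hx))
  set q : ℝ → ℝ := fun t => F2 t ^ 2 with hq
  have hqc : ContinuousOn q I := hF2c.pow 2
  set Q : ℝ → ℝ := fun y => ∫ t in (0:ℝ)..y, q t with hQdef
  have hQc : ContinuousOn Q I := hprimc q hqc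
  have hsplitq : ∀ x ∈ I, (∫ t in x..(1:ℝ), q t) = Q 1 - Q x := by
    intro x hx
    rw [eq_sub_iff_add_eq, add_comm]
    exact intervalIntegral.integral_add_adjacent_intervals
      (hci q hqc le_rfl hx.1 hx.2) (hci q hqc hx.1 hx.2 le_rfl)
  have hQnonneg : ∀ {a b : ℝ}, a ≤ b → 0 ≤ ∫ t in a..b, q t := by
    intro a b hab
    apply intervalIntegral.integral_nonneg hab
    intro t _; positivity
  -- pointwise bound
  have hpt : ∀ x ∈ I, (f x - (f 0 * (1 - x) + f 1 * x)) ^ 2 * g x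
      ≤ 2 * (g x * ((1 - x) ^ 2 * x ^ 3 / 3) * Q x
        + g x * (x ^ 2 * (1 - x) ^ 3 / 3) * (Q 1 - Q x)) := by
    intro x hxI
    have hgx : 0 ≤ g x := hg0 x hxI
    have hQx : 0 ≤ Q x := hQnonneg hxI.1
    have hQ1x : 0 ≤ Q 1 - Q x := by
      rw [← hsplitq x hxI]; exact hQnonneg hxI.2
    rcases eq_or_lt_of_le hxI.1 with h0 | h0
    · rw [← h0]; norm_num
    rcases eq_or_lt_of_le hxI.2 with h1 | h1
    · rw [h1]; norm_num
    have hx : x ∈ Set.Ioo (0:ℝ) 1 := ⟨h0, h1⟩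
    have hrep : f x - (f 0 * (1 - x) + f 1 * x)
        = -((1 - x) * (∫ t in (0:ℝ)..x, t * F2 t)) - x * (∫ t in x..(1:ℝ), (1 - t) * F2 t) := by
      rw [I1eq x hx, I2eq x hx]; ring
    have c1 : (∫ t in (0:ℝ)..x, t * F2 t) ^ 2 ≤ x ^ 3 / 3 * ∫ t in (0:ℝ)..x, q t := by
      have h := cs_interval hx.1.le (u := fun t => t) (v := F2) continuousOn_id
        (hF2c.mono (hIicc le_rfl hx.2.le))
      have h2 : (∫ t in (0:ℝ)..x, t ^ 2) = x ^ 3 / 3 := by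
        rw [integral_pow]; norm_num
      rwa [h2] at h
    have c2 : (∫ t in x..(1:ℝ), (1 - t) * F2 t) ^ 2
        ≤ (1 - x) ^ 3 / 3 * ∫ t in x..(1:ℝ), q t := by
      have h := cs_interval hx.2.le (u := fun t => 1 - t) (v := F2)
        (continuousOn_const.sub continuousOn_id) (hF2c.mono (hIicc hx.1.le le_rfl))
      have h2 : (∫ t in x..(1:ℝ), (1 - t) ^ 2) = (1 - x) ^ 3 / 3 := by
        rw [intervalIntegral.integral_comp_sub_left (fun u => u ^ 2) 1]
        rw [integral_pow]; norm_num
      rwa [h2] at h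
    rw [hrep, ← hsplitq x hxI]
    set I1 := ∫ t in (0:ℝ)..x, t * F2 t
    set I2 := ∫ t in x..(1:ℝ), (1 - t) * F2 t
    set Qa := ∫ t in (0:ℝ)..x, q t
    set Qb := ∫ t in x..(1:ℝ), q t
    have hQa : 0 ≤ Qa := hQnonneg hx.1.le
    have hQb : 0 ≤ Qb := hQnonneg hx.2.le
    have step1 : (-((1 - x) * I1) - x * I2) ^ 2 ≤ 2 * (1 - x) ^ 2 * I1 ^ 2 + 2 * x ^ 2 * I2 ^ 2 := by
      nlinarith [sq_nonneg ((1 - x) * I1 - x * I2)]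
    have step2 : 2 * (1 - x) ^ 2 * I1 ^ 2 + 2 * x ^ 2 * I2 ^ 2
        ≤ 2 * ((1 - x) ^ 2 * x ^ 3 / 3 * Qa + x ^ 2 * ((1 - x) ^ 3 / 3) * Qb) := by
      nlinarith [mul_le_mul_of_nonneg_left c1 (sq_nonneg (1 - x)),
        mul_le_mul_of_nonneg_left c2 (sq_nonneg x)]
    calc (-((1 - x) * I1) - x * I2) ^ 2 * g x
        ≤ (2 * ((1 - x) ^ 2 * x ^ 3 / 3 * Qa + x ^ 2 * ((1 - x) ^ 3 / 3) * Qb)) * g x :=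
          mul_le_mul_of_nonneg_right (step1.trans step2) hgx
      _ = 2 * (g x * ((1 - x) ^ 2 * x ^ 3 / 3) * Qa + g x * (x ^ 2 * (1 - x) ^ 3 / 3) * Qb) := by
          ring
  -- kernel continuity
  have hpolyA : Continuous fun x : ℝ => (1 - x) ^ 2 * x ^ 3 / 3 := by fun_prop
  have hpolyB : Continuous fun x : ℝ => x ^ 2 * (1 - x) ^ 3 / 3 := by fun_prop
  have hkAc : ContinuousOn (fun x => g x * ((1 - x) ^ 2 * x ^ 3 / 3)) I :=
    hgc.mul hpolyA.continuousOn
  have hkBc : ContinuousOn (fun x => g x * (x ^ 2 * (1 - x) ^ 3 / 3)) I :=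
    hgc.mul hpolyB.continuousOn
  have hLc : ContinuousOn (fun x => (f x - (f 0 * (1 - x) + f 1 * x)) ^ 2 * g x) I :=
    ((hfc.sub ((by fun_prop : Continuous fun x : ℝ => f 0 * (1 - x) + f 1 * x)).continuousOn).pow
      2).mul hgc
  have hRc : ContinuousOn (fun x => 2 * (g x * ((1 - x) ^ 2 * x ^ 3 / 3) * Q x
      + g x * (x ^ 2 * (1 - x) ^ 3 / 3) * (Q 1 - Q x))) I :=
    continuousOn_const.mul ((hkAc.mul hQc).add (hkBc.mul (continuousOn_const.sub hQc)))
  have hmono := intervalIntegral.integral_mono_on zero_le_one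
    (hci _ hLc le_rfl zero_le_one le_rfl) (hci _ hRc le_rfl zero_le_one le_rfl) hpt
  have hp1 := parts1 (fun x => g x * ((1 - x) ^ 2 * x ^ 3 / 3)) q hkAc hqc
  have hp2 := parts1 (fun x => g x * (x ^ 2 * (1 - x) ^ 3 / 3)) q hkBc hqc
  beta_reduce at hp1 hp2
  have hAc : ContinuousOn (fun y => ∫ s in (0:ℝ)..y, g s * ((1 - s) ^ 2 * s ^ 3 / 3)) I :=
    hprimc _ hkAc
  have hBc : ContinuousOn (fun y => ∫ s in (0:ℝ)..y, g s * (s ^ 2 * (1 - s) ^ 3 / 3)) I :=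
    hprimc _ hkBc
  -- rewrite the statement's RHS integral
  have hRHS : (∫ t in (0:ℝ)..1,
        ((∫ ξ in (0:ℝ)..t, g ξ * (ξ ^ 2 * (1 - ξ) ^ 3 / 3))
          + ∫ ξ in t..(1:ℝ), g ξ * ((1 - ξ) ^ 2 * ξ ^ 3 / 3)) * (deriv (deriv f) t) ^ 2)
      = ∫ t in (0:ℝ)..1,
        ((∫ ξ in (0:ℝ)..t, g ξ * (ξ ^ 2 * (1 - ξ) ^ 3 / 3))
          + ((∫ s in (0:ℝ)..1, g s * ((1 - s) ^ 2 * s ^ 3 / 3))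
            - ∫ s in (0:ℝ)..t, g s * ((1 - s) ^ 2 * s ^ 3 / 3))) * q t := by
    apply intervalIntegral.integral_congr_ae
    have h1 : ∀ᵐ t : ℝ, t ≠ (1:ℝ) := by
      refine MeasureTheory.ae_iff.2 ?_
      simp only [not_not, Set.setOf_eq_eq_singleton]
      exact Real.volume_singleton
    filter_upwards [h1] with t ht htm
    have htIoc : t ∈ Set.Ioc (0:ℝ) 1 := by rwa [Set.uIoc_of_le zero_le_one] at htm
    have htOo : t ∈ Set.Ioo (0:ℝ) 1 := ⟨htIoc.1, lt_of_le_of_ne htIoc.2 ht⟩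
    rw [hdd t htOo]
    have hadj := intervalIntegral.integral_add_adjacent_intervals
      (hci _ hkAc le_rfl htOo.1.le htOo.2.le) (hci _ hkAc htOo.1.le htOo.2.le le_rfl)
    have : (∫ ξ in t..(1:ℝ), g ξ * ((1 - ξ) ^ 2 * ξ ^ 3 / 3))
        = (∫ s in (0:ℝ)..1, g s * ((1 - s) ^ 2 * s ^ 3 / 3))
          - ∫ s in (0:ℝ)..t, g s * ((1 - s) ^ 2 * s ^ 3 / 3) := by linarith [hadj]
    rw [this]
  -- expand the rewritten RHS integral
  have hexp : (∫ t in (0:ℝ)..1,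
        ((∫ ξ in (0:ℝ)..t, g ξ * (ξ ^ 2 * (1 - ξ) ^ 3 / 3))
          + ((∫ s in (0:ℝ)..1, g s * ((1 - s) ^ 2 * s ^ 3 / 3))
            - ∫ s in (0:ℝ)..t, g s * ((1 - s) ^ 2 * s ^ 3 / 3))) * q t)
      = (∫ t in (0:ℝ)..1, (∫ ξ in (0:ℝ)..t, g ξ * (ξ ^ 2 * (1 - ξ) ^ 3 / 3)) * q t)
        + ((∫ s in (0:ℝ)..1, g s * ((1 - s) ^ 2 * s ^ 3 / 3)) * (∫ t in (0:ℝ)..1, q t)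
          - ∫ t in (0:ℝ)..1, (∫ s in (0:ℝ)..t, g s * ((1 - s) ^ 2 * s ^ 3 / 3)) * q t) := by
    have e1 : ∀ t : ℝ, ((∫ ξ in (0:ℝ)..t, g ξ * (ξ ^ 2 * (1 - ξ) ^ 3 / 3))
          + ((∫ s in (0:ℝ)..1, g s * ((1 - s) ^ 2 * s ^ 3 / 3))
            - ∫ s in (0:ℝ)..t, g s * ((1 - s) ^ 2 * s ^ 3 / 3))) * q t
        = (∫ ξ in (0:ℝ)..t, g ξ * (ξ ^ 2 * (1 - ξ) ^ 3 / 3)) * q t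
          + ((∫ s in (0:ℝ)..1, g s * ((1 - s) ^ 2 * s ^ 3 / 3)) * q t
            - (∫ s in (0:ℝ)..t, g s * ((1 - s) ^ 2 * s ^ 3 / 3)) * q t) := by
      intro t; ring
    simp_rw [e1]
    rw [intervalIntegral.integral_add
      (f := fun t => (∫ ξ in (0:ℝ)..t, g ξ * (ξ ^ 2 * (1 - ξ) ^ 3 / 3)) * q t)
      (g := fun t => (∫ s in (0:ℝ)..1, g s * ((1 - s) ^ 2 * s ^ 3 / 3)) * q t
        - (∫ s in (0:ℝ)..t, g s * ((1 - s) ^ 2 * s ^ 3 / 3)) * q t)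
      (hci _ (hBc.mul hqc) le_rfl zero_le_one le_rfl)
      ((hci _ ((continuousOn_const.mul hqc).sub (hAc.mul hqc)) le_rfl zero_le_one le_rfl)),
      intervalIntegral.integral_sub
        (f := fun t => (∫ s in (0:ℝ)..1, g s * ((1 - s) ^ 2 * s ^ 3 / 3)) * q t)
        (g := fun t => (∫ s in (0:ℝ)..t, g s * ((1 - s) ^ 2 * s ^ 3 / 3)) * q t)
        (hci _ (continuousOn_const.mul hqc) le_rfl zero_le_one le_rfl)
        (hci _ (hAc.mul hqc) le_rfl zero_le_one le_rfl),
      intervalIntegral.integral_const_mul]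
  -- expand the middle bound integral
  have hmid : (∫ x in (0:ℝ)..1, 2 * (g x * ((1 - x) ^ 2 * x ^ 3 / 3) * Q x
        + g x * (x ^ 2 * (1 - x) ^ 3 / 3) * (Q 1 - Q x)))
      = 2 * ((∫ x in (0:ℝ)..1, g x * ((1 - x) ^ 2 * x ^ 3 / 3) * Q x)
        + ((∫ x in (0:ℝ)..1, g x * (x ^ 2 * (1 - x) ^ 3 / 3)) * Q 1
          - ∫ x in (0:ℝ)..1, g x * (x ^ 2 * (1 - x) ^ 3 / 3) * Q x)) := by
    have e2 : ∀ x : ℝ, 2 * (g x * ((1 - x) ^ 2 * x ^ 3 / 3) * Q x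
          + g x * (x ^ 2 * (1 - x) ^ 3 / 3) * (Q 1 - Q x))
        = 2 * (g x * ((1 - x) ^ 2 * x ^ 3 / 3) * Q x
          + (g x * (x ^ 2 * (1 - x) ^ 3 / 3) * Q 1 - g x * (x ^ 2 * (1 - x) ^ 3 / 3) * Q x)) := by
      intro x; ring
    simp_rw [e2]
    rw [intervalIntegral.integral_const_mul,
      intervalIntegral.integral_add (f := fun x => g x * ((1 - x) ^ 2 * x ^ 3 / 3) * Q x)
        (g := fun x => g x * (x ^ 2 * (1 - x) ^ 3 / 3) * Q 1 - g x * (x ^ 2 * (1 - x) ^ 3 / 3) * Q x)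
        (hci _ ((hkAc.mul hQc)) le_rfl zero_le_one le_rfl)
        ((hci _ ((hkBc.mul continuousOn_const).sub (hkBc.mul hQc)) le_rfl zero_le_one le_rfl)),
      intervalIntegral.integral_sub (f := fun x => g x * (x ^ 2 * (1 - x) ^ 3 / 3) * Q 1)
        (g := fun x => g x * (x ^ 2 * (1 - x) ^ 3 / 3) * Q x)
        (hci _ (hkBc.mul continuousOn_const) le_rfl zero_le_one le_rfl)
        (hci _ (hkBc.mul hQc) le_rfl zero_le_one le_rfl),
      intervalIntegral.integral_mul_const]
  rw [hRHS, hexp]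
  rw [hmid] at hmono
  have hQ1 : Q 1 = ∫ t in (0:ℝ)..1, q t := rfl
  have hQx : ∀ x, Q x = ∫ t in (0:ℝ)..x, q t := fun x => rfl
  simp_rw [hQx] at hmono
  linarith [hmono, hp1, hp2]
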